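/- In an optimal schedule, server types in a lane never change immediately: if ŷ_{t-1,k} > 0 and ŷ_{t,k} > 0, then ŷ_{t-1,k} = ŷ_{t,k}. -/
import Mathlib


open Finset

/-- A schedule `x` (where `x t j` is the number of active servers of type `j` at time `t`)
is feasible for horizon `T`, `d` server types with `m j` servers of type `j`, and job
volumes `lam`: all servers are off at time `0` and after time `T`, the demand is met,
and no more servers are used than available. -/
def Feasible (T d : ℕ) (m lam : ℕ → ℕ) (x : ℕ → ℕ → ℕ) : Prop :=
  (∀ j, x 0 j = 0) ∧
  (∀ t, T < t → ∀ j, x t j = 0) ∧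
  (∀ t ∈ Finset.Icc 1 T, lam t ≤ ∑ j ∈ Finset.Icc 1 d, x t j ∧ ∀ j, x t j ≤ m j)

/-- Total cost of a schedule: operating costs plus switching costs for powering up. -/
noncomputable def cost (T d : ℕ) (β l : ℕ → ℝ) (x : ℕ → ℕ → ℕ) : ℝ :=
  ∑ t ∈ Finset.Icc 1 T, ∑ j ∈ Finset.Icc 1 d,
    (l j * (x t j : ℝ) + β j * ((x t j - x (t - 1) j : ℕ) : ℝ))

/-- An optimal schedule: feasible and of minimum cost among feasible schedules. -/
def Optimal (T d : ℕ) (m lam : ℕ → ℕ) (β l : ℕ → ℝ) (x : ℕ → ℕ → ℕ) : Prop :=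
  Feasible T d m lam x ∧
  ∀ x', Feasible T d m lam x' → cost T d β l x ≤ cost T d β l x'

/-- The lane representation: `lane d x t k` is the server type serving lane `k`
at time `t` (largest `j ∈ [1,d]` with `∑_{j'=j}^{d} x t j' ≥ k`, else `0`). -/
noncomputable def lane (d : ℕ) (x : ℕ → ℕ → ℕ) (t k : ℕ) : ℕ :=
  sSup {j | j ∈ Finset.Icc 1 d ∧ k ≤ ∑ j' ∈ Finset.Icc j d, x t j'}

/-! ### Auxiliary machinery for the exchange argument -/

/-- The modified schedule: inside the time window `[u,v]`, run one more server of
type `j0` and one fewer of type `j1`. -/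
def tweak (x : ℕ → ℕ → ℕ) (j0 j1 u v : ℕ) : ℕ → ℕ → ℕ := fun s j =>
  if u ≤ s ∧ s ≤ v then (if j = j0 then x s j + 1 else if j = j1 then x s j - 1 else x s j)
  else x s j

lemma tweak_j0 {x : ℕ → ℕ → ℕ} {j0 j1 u v s : ℕ} (h1 : u ≤ s) (h2 : s ≤ v) :
    tweak x j0 j1 u v s j0 = x s j0 + 1 := by simp [tweak, h1, h2]

lemma tweak_j1 {x : ℕ → ℕ → ℕ} {j0 j1 u v s : ℕ} (hne : j1 ≠ j0) (h1 : u ≤ s) (h2 : s ≤ v) :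
    tweak x j0 j1 u v s j1 = x s j1 - 1 := by simp [tweak, h1, h2, hne]

lemma tweak_out {x : ℕ → ℕ → ℕ} {j0 j1 u v s : ℕ} (h : ¬(u ≤ s ∧ s ≤ v)) (j : ℕ) :
    tweak x j0 j1 u v s j = x s j := by simp [tweak, h]

lemma tweak_other {x : ℕ → ℕ → ℕ} {j0 j1 u v : ℕ} (s : ℕ) {j : ℕ}
    (h0 : j ≠ j0) (h1 : j ≠ j1) :
    tweak x j0 j1 u v s j = x s j := by simp [tweak, h0, h1]

/-- Single cost term. -/
noncomputable def ft (β l : ℕ → ℝ) (x : ℕ → ℕ → ℕ) (s j : ℕ) : ℝ :=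
  l j * (x s j : ℝ) + β j * ((x s j - x (s - 1) j : ℕ) : ℝ)

/-- Cost difference contribution at time `s` of the tweak. -/
noncomputable def gg (β l : ℕ → ℝ) (x : ℕ → ℕ → ℕ) (j0 j1 u v s : ℕ) : ℝ :=
  (ft β l (tweak x j0 j1 u v) s j0 - ft β l x s j0)
  + (ft β l (tweak x j0 j1 u v) s j1 - ft β l x s j1)

lemma tweak_feasible {T d : ℕ} {m lam : ℕ → ℕ} {x : ℕ → ℕ → ℕ}
    (hf : Feasible T d m lam x) {j0 j1 u v : ℕ}
    (hj1 : 1 ≤ j1) (hjj : j1 < j0) (hj0 : j0 ≤ d)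
    (hu : 1 ≤ u) (hv : v ≤ T)
    (hwin : ∀ s, u ≤ s → s ≤ v → 1 ≤ x s j1 ∧ x s j0 < m j0) :
    Feasible T d m lam (tweak x j0 j1 u v) := by
  obtain ⟨h0, hT, hd⟩ := hf
  have hne : j1 ≠ j0 := Nat.ne_of_lt hjj
  refine ⟨fun j => ?_, fun s hs j => ?_, fun s hs => ?_⟩
  · rw [tweak_out (by omega)]; exact h0 j
  · rw [tweak_out (by omega)]; exact hT s hs j
  · rw [Finset.mem_Icc] at hs
    by_cases hw : u ≤ s ∧ s ≤ v
    · have hx1 := (hwin s hw.1 hw.2).1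
      have hx0 := (hwin s hw.1 hw.2).2
      constructor
      · have hm0 : j0 ∈ Finset.Icc 1 d := Finset.mem_Icc.mpr ⟨by omega, hj0⟩
        have hm1 : j1 ∈ (Finset.Icc 1 d).erase j0 := by
          rw [Finset.mem_erase, Finset.mem_Icc]; exact ⟨hne, hj1, by omega⟩
        have hsum : ∑ j ∈ Finset.Icc 1 d, tweak x j0 j1 u v s j
            = ∑ j ∈ Finset.Icc 1 d, x s j := by
          rw [← Finset.add_sum_erase _ (tweak x j0 j1 u v s) hm0,
              ← Finset.add_sum_erase _ (tweak x j0 j1 u v s) hm1,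
              ← Finset.add_sum_erase _ (x s) hm0,
              ← Finset.add_sum_erase _ (x s) hm1]
          have hrest : ∑ j ∈ ((Finset.Icc 1 d).erase j0).erase j1, tweak x j0 j1 u v s j
              = ∑ j ∈ ((Finset.Icc 1 d).erase j0).erase j1, x s j := by
            refine Finset.sum_congr rfl fun j hj => ?_
            rw [Finset.mem_erase, Finset.mem_erase] at hj
            exact tweak_other s hj.2.1 hj.1
          rw [tweak_j0 hw.1 hw.2, tweak_j1 hne hw.1 hw.2, hrest]
          omega
        rw [hsum]; exact (hd s (Finset.mem_Icc.mpr hs)).1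
      · intro j
        by_cases e0 : j = j0
        · subst e0; rw [tweak_j0 hw.1 hw.2]; omega
        by_cases e1 : j = j1
        · subst e1; rw [tweak_j1 hne hw.1 hw.2]
          exact le_trans (Nat.sub_le _ _) ((hd s (Finset.mem_Icc.mpr hs)).2 j)
        · rw [tweak_other s e0 e1]; exact (hd s (Finset.mem_Icc.mpr hs)).2 j
    · constructor
      · have hsum : ∑ j ∈ Finset.Icc 1 d, tweak x j0 j1 u v s j
            = ∑ j ∈ Finset.Icc 1 d, x s j :=
          Finset.sum_congr rfl fun j _ => tweak_out hw j
        rw [hsum]; exact (hd s (Finset.mem_Icc.mpr hs)).1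
      · intro j; rw [tweak_out hw]; exact (hd s (Finset.mem_Icc.mpr hs)).2 j

lemma tweak_cost {T d : ℕ} (β l : ℕ → ℝ) (x : ℕ → ℕ → ℕ) {j0 j1 u v : ℕ}
    (hj1 : 1 ≤ j1) (hjj : j1 < j0) (hj0 : j0 ≤ d)
    (hu : 1 ≤ u) (huv : u ≤ v) (hv : v ≤ T) :
    cost T d β l (tweak x j0 j1 u v) - cost T d β l x
      = ∑ s ∈ Finset.Icc u (min (v + 1) T), gg β l x j0 j1 u v s := by
  have hne : j1 ≠ j0 := Nat.ne_of_lt hjj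
  have hm0 : j0 ∈ Finset.Icc 1 d := Finset.mem_Icc.mpr ⟨by omega, hj0⟩
  have hm1 : j1 ∈ (Finset.Icc 1 d).erase j0 := by
    rw [Finset.mem_erase, Finset.mem_Icc]; exact ⟨hne, hj1, by omega⟩
  have hcost : ∀ y : ℕ → ℕ → ℕ,
      cost T d β l y = ∑ s ∈ Finset.Icc 1 T, ∑ j ∈ Finset.Icc 1 d, ft β l y s j := fun y => rfl
  rw [hcost, hcost, ← Finset.sum_sub_distrib]
  have hstep : ∀ s, ((∑ j ∈ Finset.Icc 1 d, ft β l (tweak x j0 j1 u v) s j)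
      - ∑ j ∈ Finset.Icc 1 d, ft β l x s j) = gg β l x j0 j1 u v s := by
    intro s
    rw [← Finset.sum_sub_distrib,
        ← Finset.add_sum_erase _ (fun j => ft β l (tweak x j0 j1 u v) s j - ft β l x s j) hm0,
        ← Finset.add_sum_erase _ (fun j => ft β l (tweak x j0 j1 u v) s j - ft β l x s j) hm1]
    have hz : ∑ j ∈ ((Finset.Icc 1 d).erase j0).erase j1,
        (ft β l (tweak x j0 j1 u v) s j - ft β l x s j) = 0 := by
      refine Finset.sum_eq_zero fun j hj => ?_
      rw [Finset.mem_erase, Finset.mem_erase] at hj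
      simp only [ft, tweak_other _ hj.2.1 hj.1]
      ring
    rw [hz, gg]; ring
  rw [Finset.sum_congr rfl fun s _ => hstep s]
  symm
  refine Finset.sum_subset ?_ ?_
  · intro s hs; rw [Finset.mem_Icc] at hs ⊢; omega
  · intro s hs hns
    rw [Finset.mem_Icc] at hs
    rw [Finset.mem_Icc] at hns
    have o1 : ¬(u ≤ s ∧ s ≤ v) := by omega
    have o2 : ¬(u ≤ s - 1 ∧ s - 1 ≤ v) := by omega
    simp only [gg, ft, tweak_out o1, tweak_out o2]
    ring

/-- Strict interior of the window: cost difference is exactly `l j0 - l j1`. -/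
lemma interior_eq {β l : ℕ → ℝ} {x : ℕ → ℕ → ℕ} {j0 j1 u v s : ℕ}
    (hne : j1 ≠ j0) (h1 : u < s) (h2 : s ≤ v)
    (ha : 1 ≤ x s j1) (hb : 1 ≤ x (s - 1) j1) :
    gg β l x j0 j1 u v s = l j0 - l j1 := by
  have e1 : tweak x j0 j1 u v s j0 = x s j0 + 1 := tweak_j0 (by omega) h2
  have e2 : tweak x j0 j1 u v (s - 1) j0 = x (s - 1) j0 + 1 := tweak_j0 (by omega) (by omega)
  have e3 : tweak x j0 j1 u v s j1 = x s j1 - 1 := tweak_j1 hne (by omega) h2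
  have e4 : tweak x j0 j1 u v (s - 1) j1 = x (s - 1) j1 - 1 := tweak_j1 hne (by omega) (by omega)
  simp only [gg, ft, e1, e2, e3, e4]
  rw [show x s j0 + 1 - (x (s - 1) j0 + 1) = x s j0 - x (s - 1) j0 from by omega,
      show x s j1 - 1 - (x (s - 1) j1 - 1) = x s j1 - x (s - 1) j1 from by omega,
      show ((x s j1 - 1 : ℕ) : ℝ) = (x s j1 : ℝ) - 1 from by
        rw [Nat.cast_sub ha, Nat.cast_one]]
  push_cast
  ring

/-- Left boundary in case A: `j0` powers down at `u` in the original schedule. -/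
lemma leftA {β l : ℕ → ℝ} {x : ℕ → ℕ → ℕ} {j0 j1 u v : ℕ}
    (hne : j1 ≠ j0) (hu : 1 ≤ u) (huv : u ≤ v) (hb1 : 0 ≤ β j1)
    (H1 : x u j0 < x (u - 1) j0) (H2 : 1 ≤ x u j1) :
    gg β l x j0 j1 u v u ≤ l j0 - l j1 := by
  have e1 : tweak x j0 j1 u v u j0 = x u j0 + 1 := tweak_j0 le_rfl huv
  have e3 : tweak x j0 j1 u v u j1 = x u j1 - 1 := tweak_j1 hne le_rfl huv
  have e2 : tweak x j0 j1 u v (u - 1) j0 = x (u - 1) j0 := tweak_out (by omega) j0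
  have e4 : tweak x j0 j1 u v (u - 1) j1 = x (u - 1) j1 := tweak_out (by omega) j1
  simp only [gg, ft, e1, e2, e3, e4]
  rw [show x u j0 + 1 - x (u - 1) j0 = x u j0 - x (u - 1) j0 from by omega,
      show ((x u j1 - 1 : ℕ) : ℝ) = (x u j1 : ℝ) - 1 from by
        rw [Nat.cast_sub H2, Nat.cast_one]]
  have c1 : ((x u j1 - 1 - x (u - 1) j1 : ℕ) : ℝ) ≤ ((x u j1 - x (u - 1) j1 : ℕ) : ℝ) := by
    have : x u j1 - 1 - x (u - 1) j1 ≤ x u j1 - x (u - 1) j1 := by omega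
    exact_mod_cast this
  have h1 := mul_le_mul_of_nonneg_left c1 hb1
  push_cast
  linarith

/-- Left boundary in case B. -/
lemma leftB {β l : ℕ → ℝ} {m : ℕ → ℕ} {x : ℕ → ℕ → ℕ} {j0 j1 u v : ℕ}
    (hne : j1 ≠ j0) (hu : 1 ≤ u) (huv : u ≤ v)
    (hb0 : 0 ≤ β j0) (hb1 : 0 ≤ β j1) (hb01 : β j1 ≤ β j0)
    (hx1 : 1 ≤ x u j1) (hx0 : x u j0 < m j0)
    (hstart : x (u - 1) j1 = 0 ∨ m j0 ≤ x (u - 1) j0) :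
    gg β l x j0 j1 u v u ≤ (l j0 - l j1) + (β j0 - β j1) := by
  have e1 : tweak x j0 j1 u v u j0 = x u j0 + 1 := tweak_j0 le_rfl huv
  have e3 : tweak x j0 j1 u v u j1 = x u j1 - 1 := tweak_j1 hne le_rfl huv
  have e2 : tweak x j0 j1 u v (u - 1) j0 = x (u - 1) j0 := tweak_out (by omega) j0
  have e4 : tweak x j0 j1 u v (u - 1) j1 = x (u - 1) j1 := tweak_out (by omega) j1
  simp only [gg, ft, e1, e2, e3, e4]
  rw [show ((x u j1 - 1 : ℕ) : ℝ) = (x u j1 : ℝ) - 1 from by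
        rw [Nat.cast_sub hx1, Nat.cast_one]]
  rcases hstart with hz | hcap
  · have c0 : ((x u j0 + 1 - x (u - 1) j0 : ℕ) : ℝ)
        ≤ ((x u j0 - x (u - 1) j0 : ℕ) : ℝ) + 1 := by
      have : x u j0 + 1 - x (u - 1) j0 ≤ (x u j0 - x (u - 1) j0) + 1 := by omega
      exact_mod_cast this
    have c1 : ((x u j1 - 1 - x (u - 1) j1 : ℕ) : ℝ)
        = ((x u j1 - x (u - 1) j1 : ℕ) : ℝ) - 1 := by
      rw [show x u j1 - x (u - 1) j1 = (x u j1 - 1 - x (u - 1) j1) + 1 from by omega]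
      push_cast
      ring
    rw [c1]
    have h0 := mul_le_mul_of_nonneg_left c0 hb0
    rw [mul_add, mul_one] at h0
    push_cast
    linarith
  · rw [show x u j0 + 1 - x (u - 1) j0 = x u j0 - x (u - 1) j0 from by omega]
    have c1 : ((x u j1 - 1 - x (u - 1) j1 : ℕ) : ℝ) ≤ ((x u j1 - x (u - 1) j1 : ℕ) : ℝ) := by
      have : x u j1 - 1 - x (u - 1) j1 ≤ x u j1 - x (u - 1) j1 := by omega
      exact_mod_cast this
    have h1 := mul_le_mul_of_nonneg_left c1 hb1
    push_cast
    linarith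

/-- Right boundary when `j0` powers up at `v+1` in the original schedule. -/
lemma bnd_up {β l : ℕ → ℝ} {x : ℕ → ℕ → ℕ} {j0 j1 u v : ℕ}
    (hne : j1 ≠ j0) (huv : u ≤ v) (hb0 : 0 ≤ β j0) (hb1 : 0 ≤ β j1)
    (H1 : x v j0 < x (v + 1) j0) (hx1 : 1 ≤ x v j1) :
    gg β l x j0 j1 u v (v + 1) ≤ β j1 - β j0 := by
  have e1 : tweak x j0 j1 u v (v + 1) j0 = x (v + 1) j0 := tweak_out (by omega) j0
  have e1' : tweak x j0 j1 u v (v + 1) j1 = x (v + 1) j1 := tweak_out (by omega) j1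
  have e2 : tweak x j0 j1 u v v j0 = x v j0 + 1 := tweak_j0 huv le_rfl
  have e3 : tweak x j0 j1 u v v j1 = x v j1 - 1 := tweak_j1 hne huv le_rfl
  simp only [gg, ft, Nat.add_sub_cancel, e1, e1', e2, e3]
  have c0 : ((x (v + 1) j0 - (x v j0 + 1) : ℕ) : ℝ)
      = ((x (v + 1) j0 - x v j0 : ℕ) : ℝ) - 1 := by
    rw [show x (v + 1) j0 - x v j0 = (x (v + 1) j0 - (x v j0 + 1)) + 1 from by omega]
    push_cast
    ring
  have c1 : ((x (v + 1) j1 - (x v j1 - 1) : ℕ) : ℝ)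
      ≤ ((x (v + 1) j1 - x v j1 : ℕ) : ℝ) + 1 := by
    have : x (v + 1) j1 - (x v j1 - 1) ≤ (x (v + 1) j1 - x v j1) + 1 := by omega
    exact_mod_cast this
  rw [c0]
  have h1 := mul_le_mul_of_nonneg_left c1 hb1
  rw [mul_add, mul_one] at h1
  linarith

/-- Right boundary when `j1` is off at `v+1` in the original schedule. -/
lemma bnd_stop {β l : ℕ → ℝ} {x : ℕ → ℕ → ℕ} {j0 j1 u v : ℕ}
    (hne : j1 ≠ j0) (huv : u ≤ v) (hb0 : 0 ≤ β j0) (hb1 : 0 ≤ β j1)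
    (hz : x (v + 1) j1 = 0) (hx1 : 1 ≤ x v j1) :
    gg β l x j0 j1 u v (v + 1) ≤ 0 := by
  have e1 : tweak x j0 j1 u v (v + 1) j0 = x (v + 1) j0 := tweak_out (by omega) j0
  have e1' : tweak x j0 j1 u v (v + 1) j1 = x (v + 1) j1 := tweak_out (by omega) j1
  have e2 : tweak x j0 j1 u v v j0 = x v j0 + 1 := tweak_j0 huv le_rfl
  have e3 : tweak x j0 j1 u v v j1 = x v j1 - 1 := tweak_j1 hne huv le_rfl
  simp only [gg, ft, Nat.add_sub_cancel, e1, e1', e2, e3]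
  rw [show x (v + 1) j1 - (x v j1 - 1) = x (v + 1) j1 - x v j1 from by omega]
  have c0 : ((x (v + 1) j0 - (x v j0 + 1) : ℕ) : ℝ) ≤ ((x (v + 1) j0 - x v j0 : ℕ) : ℝ) := by
    have : x (v + 1) j0 - (x v j0 + 1) ≤ x (v + 1) j0 - x v j0 := by omega
    exact_mod_cast this
  have h0 := mul_le_mul_of_nonneg_left c0 hb0
  linarith

/-- Exchange argument, case A: type `j0` powers down at time `t` while the cheaper-to-run
type would be available; contradiction with optimality. -/
lemma exchangeA (T d : ℕ) (m lam : ℕ → ℕ) (β l : ℕ → ℝ)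
    (x : ℕ → ℕ → ℕ) (hopt : Optimal T d m lam β l x)
    (j0 j1 t : ℕ) (hj1 : 1 ≤ j1) (hjj : j1 < j0) (hj0 : j0 ≤ d)
    (hl01 : l j0 < l j1) (hb01 : β j1 ≤ β j0) (hb0 : 0 ≤ β j0) (hb1 : 0 ≤ β j1)
    (ht1 : 1 ≤ t) (htT : t ≤ T)
    (H1 : x t j0 < x (t - 1) j0) (H2 : 1 ≤ x t j1) : False := by
  obtain ⟨⟨h0, hT, hdem⟩, hmin⟩ := hopt
  have hne : j1 ≠ j0 := Nat.ne_of_lt hjj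
  have ht2 : 1 ≤ t - 1 := by
    by_contra hc
    have h00 : t - 1 = 0 := by omega
    rw [h00, h0 j0] at H1; omega
  have hcap : x (t - 1) j0 ≤ m j0 := (hdem (t - 1) (Finset.mem_Icc.mpr ⟨ht2, by omega⟩)).2 j0
  have hbdd : BddAbove {s : ℕ | s ≤ T ∧ ∀ σ, t ≤ σ → σ ≤ s → 1 ≤ x σ j1 ∧ x σ j0 < m j0} :=
    ⟨T, fun s hs => hs.1⟩
  have hPt : t ∈ {s : ℕ | s ≤ T ∧ ∀ σ, t ≤ σ → σ ≤ s → 1 ≤ x σ j1 ∧ x σ j0 < m j0} := by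
    refine ⟨htT, fun σ hσ1 hσ2 => ?_⟩
    have hσ : σ = t := le_antisymm hσ2 hσ1
    subst hσ; exact ⟨H2, lt_of_lt_of_le H1 hcap⟩
  set v := sSup {s : ℕ | s ≤ T ∧ ∀ σ, t ≤ σ → σ ≤ s → 1 ≤ x σ j1 ∧ x σ j0 < m j0} with hvdef
  have hPv := Nat.sSup_mem ⟨t, hPt⟩ hbdd
  simp only [Set.mem_setOf_eq] at hPv
  obtain ⟨hvT, hwin⟩ := hPv
  have htv : t ≤ v := le_csSup hbdd hPt
  have hnot : v + 1 ∉ {s : ℕ | s ≤ T ∧ ∀ σ, t ≤ σ → σ ≤ s → 1 ≤ x σ j1 ∧ x σ j0 < m j0} :=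
    fun h => by have := le_csSup hbdd h; omega
  have hend : v = T ∨ x (v + 1) j1 = 0 ∨ m j0 ≤ x (v + 1) j0 := by
    by_cases hvt : v = T
    · exact Or.inl hvt
    · right
      by_contra hc
      push_neg at hc
      refine hnot ⟨by omega, fun σ hσ1 hσ2 => ?_⟩
      rcases Nat.lt_or_ge σ (v + 1) with h | h
      · exact hwin σ hσ1 (by omega)
      · have hσ : σ = v + 1 := by omega
        subst hσ; exact ⟨by omega, by omega⟩
  have hfeas' : Feasible T d m lam (tweak x j0 j1 t v) :=
    tweak_feasible ⟨h0, hT, hdem⟩ hj1 hjj hj0 ht1 hvT (fun s h1 h2 => hwin s h1 h2)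
  have hle : cost T d β l x ≤ cost T d β l (tweak x j0 j1 t v) := hmin _ hfeas'
  have hsum := tweak_cost (T := T) (d := d) β l x hj1 hjj hj0 ht1 htv hvT
  have hb : ∀ s ∈ Finset.Icc t v, gg β l x j0 j1 t v s ≤ l j0 - l j1 := by
    intro s hs
    rw [Finset.mem_Icc] at hs
    rcases Nat.eq_or_lt_of_le hs.1 with he | hlt
    · subst he
      exact leftA hne ht1 htv hb1 H1 H2
    · exact le_of_eq (interior_eq hne hlt hs.2 (hwin s (by omega) hs.2).1
        (hwin (s - 1) (by omega) (by omega)).1)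
  have hsumle : ∑ s ∈ Finset.Icc t v, gg β l x j0 j1 t v s ≤ l j0 - l j1 := by
    have h1 := Finset.sum_le_card_nsmul (Finset.Icc t v) _ _ hb
    rw [Nat.card_Icc, nsmul_eq_mul] at h1
    have h2 : (1 : ℝ) ≤ ((v + 1 - t : ℕ) : ℝ) := by
      have : 1 ≤ v + 1 - t := by omega
      exact_mod_cast this
    nlinarith
  by_cases hvt : v = T
  · rw [show min (v + 1) T = v from by omega] at hsum
    linarith
  · rw [show min (v + 1) T = v + 1 from by omega,
        Finset.sum_Icc_succ_top (by omega)] at hsum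
    have hgv : gg β l x j0 j1 t v (v + 1) ≤ 0 := by
      rcases hend with h | h | h
      · exact absurd h hvt
      · exact bnd_stop hne htv hb0 hb1 h (hwin v htv le_rfl).1
      · have hup : x v j0 < x (v + 1) j0 := lt_of_lt_of_le (hwin v htv le_rfl).2 h
        have := bnd_up (l := l) hne htv hb0 hb1 hup (hwin v htv le_rfl).1
        linarith
    linarith

/-- Exchange argument, case B: type `j0` powers up at time `t` while the cheaper-to-run
type ran before; contradiction with optimality. -/
lemma exchangeB (T d : ℕ) (m lam : ℕ → ℕ) (β l : ℕ → ℝ)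
    (x : ℕ → ℕ → ℕ) (hopt : Optimal T d m lam β l x)
    (j0 j1 t : ℕ) (hj1 : 1 ≤ j1) (hjj : j1 < j0) (hj0 : j0 ≤ d)
    (hl01 : l j0 < l j1) (hb01 : β j1 ≤ β j0) (hb0 : 0 ≤ β j0) (hb1 : 0 ≤ β j1)
    (ht1 : 1 ≤ t) (htT : t ≤ T)
    (H1 : x (t - 1) j0 < x t j0) (H2 : 1 ≤ x (t - 1) j1) : False := by
  obtain ⟨⟨h0, hT, hdem⟩, hmin⟩ := hopt
  have hne : j1 ≠ j0 := Nat.ne_of_lt hjj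
  have ht2 : 1 ≤ t - 1 := by
    by_contra hc
    have h00 : t - 1 = 0 := by omega
    rw [h00, h0 j1] at H2; omega
  obtain ⟨w, rfl⟩ : ∃ w, t = w + 1 := ⟨t - 1, by omega⟩
  rw [Nat.add_sub_cancel] at H1 H2
  have hw1 : 1 ≤ w := by omega
  have hcap : x (w + 1) j0 ≤ m j0 := (hdem (w + 1) (Finset.mem_Icc.mpr ⟨by omega, htT⟩)).2 j0
  have hPw : w ∈ {u : ℕ | 1 ≤ u ∧ ∀ σ, u ≤ σ → σ ≤ w → 1 ≤ x σ j1 ∧ x σ j0 < m j0} := by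
    refine ⟨hw1, fun σ hσ1 hσ2 => ?_⟩
    have hσ : σ = w := le_antisymm hσ2 hσ1
    subst hσ; exact ⟨H2, lt_of_lt_of_le H1 hcap⟩
  set u := sInf {u : ℕ | 1 ≤ u ∧ ∀ σ, u ≤ σ → σ ≤ w → 1 ≤ x σ j1 ∧ x σ j0 < m j0} with hudef
  have hPu := Nat.sInf_mem (⟨w, hPw⟩ :
    Set.Nonempty {u : ℕ | 1 ≤ u ∧ ∀ σ, u ≤ σ → σ ≤ w → 1 ≤ x σ j1 ∧ x σ j0 < m j0})
  simp only [Set.mem_setOf_eq] at hPu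
  obtain ⟨hu1, hwin⟩ := hPu
  have huw : u ≤ w := Nat.sInf_le hPw
  have hstart : x (u - 1) j1 = 0 ∨ m j0 ≤ x (u - 1) j0 := by
    by_cases hu2 : u = 1
    · left; rw [hu2]; exact h0 j1
    · have hnot : u - 1 ∉ {u : ℕ | 1 ≤ u ∧ ∀ σ, u ≤ σ → σ ≤ w → 1 ≤ x σ j1 ∧ x σ j0 < m j0} :=
        fun h => by have := Nat.sInf_le h; omega
      by_contra hc
      push_neg at hc
      refine hnot ⟨by omega, fun σ hσ1 hσ2 => ?_⟩
      rcases Nat.lt_or_ge σ u with h | h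
      · have hσ : σ = u - 1 := by omega
        subst hσ; exact ⟨by omega, by omega⟩
      · exact hwin σ h hσ2
  have hfeas' : Feasible T d m lam (tweak x j0 j1 u w) :=
    tweak_feasible ⟨h0, hT, hdem⟩ hj1 hjj hj0 hu1 (by omega) (fun s h1 h2 => hwin s h1 h2)
  have hle : cost T d β l x ≤ cost T d β l (tweak x j0 j1 u w) := hmin _ hfeas'
  have hsum := tweak_cost (T := T) (d := d) β l x hj1 hjj hj0 hu1 huw (by omega : w ≤ T)
  rw [show min (w + 1) T = w + 1 from by omega,
      Finset.sum_Icc_succ_top (by omega)] at hsum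
  have hsplit : ∑ s ∈ Finset.Icc u w, gg β l x j0 j1 u w s
      = gg β l x j0 j1 u w u + ∑ s ∈ Finset.Ioc u w, gg β l x j0 j1 u w s := by
    rw [← Finset.add_sum_erase _ _ (Finset.mem_Icc.mpr ⟨le_rfl, huw⟩), Finset.Icc_erase_left]
  have hint : ∑ s ∈ Finset.Ioc u w, gg β l x j0 j1 u w s ≤ 0 := by
    refine Finset.sum_nonpos fun s hs => ?_
    rw [Finset.mem_Ioc] at hs
    rw [interior_eq hne hs.1 hs.2 (hwin s (by omega) hs.2).1
        (hwin (s - 1) (by omega) (by omega)).1]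
    linarith
  have hgu := leftB (l := l) (m := m) hne hu1 huw hb0 hb1 hb01
    (hwin u le_rfl huw).1 (hwin u le_rfl huw).2 hstart
  have hgt := bnd_up (l := l) hne huw hb0 hb1 H1 (hwin w huw le_rfl).1
  linarith

/-! ### Lane facts -/

lemma lane_spec (d : ℕ) (x : ℕ → ℕ → ℕ) (s k : ℕ) (h : 0 < lane d x s k) :
    lane d x s k ∈ Finset.Icc 1 d ∧ k ≤ ∑ j' ∈ Finset.Icc (lane d x s k) d, x s j' := by
  have hbdd : BddAbove {j | j ∈ Finset.Icc 1 d ∧ k ≤ ∑ j' ∈ Finset.Icc j d, x s j'} :=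
    ⟨d, fun i hi => (Finset.mem_Icc.mp hi.1).2⟩
  have hne : Set.Nonempty {j | j ∈ Finset.Icc 1 d ∧ k ≤ ∑ j' ∈ Finset.Icc j d, x s j'} := by
    by_contra hc
    rw [Set.not_nonempty_iff_eq_empty] at hc
    rw [lane, hc, csSup_empty] at h
    simp at h
  have hmem := Nat.sSup_mem hne hbdd
  simp only [lane]
  exact hmem

lemma le_lane (d : ℕ) (x : ℕ → ℕ → ℕ) (s k j : ℕ) (hj : j ∈ Finset.Icc 1 d)
    (hk : k ≤ ∑ j' ∈ Finset.Icc j d, x s j') : j ≤ lane d x s k := by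
  have hbdd : BddAbove {j | j ∈ Finset.Icc 1 d ∧ k ≤ ∑ j' ∈ Finset.Icc j d, x s j'} :=
    ⟨d, fun i hi => (Finset.mem_Icc.mp hi.1).2⟩
  simp only [lane]
  exact le_csSup hbdd ⟨hj, hk⟩

/-- In an optimal schedule, server types in a lane never change
immediately: if `lane (t-1) k > 0` and `lane t k > 0` then they are equal. -/
theorem no_immediate_server_change (T d : ℕ) (m lam : ℕ → ℕ) (β l : ℕ → ℝ)
    (hl : ∀ j j', 1 ≤ j → j < j' → j' ≤ d → l j' < l j)
    (hl0 : ∀ j, 1 ≤ j → j ≤ d → 0 ≤ l j)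
    (hβ : ∀ j j', 1 ≤ j → j < j' → j' ≤ d → β j < β j')
    (hβ0 : ∀ j, 1 ≤ j → j ≤ d → 0 < β j)
    (x : ℕ → ℕ → ℕ) (hopt : Optimal T d m lam β l x)
    (t k : ℕ) (ht1 : 1 ≤ t) (htT : t ≤ T)
    (h1 : 0 < lane d x (t - 1) k) (h2 : 0 < lane d x t k) :
    lane d x (t - 1) k = lane d x t k := by
  by_contra hne
  obtain ⟨ham, has⟩ := lane_spec d x (t - 1) k h1
  obtain ⟨hbm, hbs⟩ := lane_spec d x t k h2
  set a := lane d x (t - 1) k with hadef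
  set b := lane d x t k with hbdef
  rw [Finset.mem_Icc] at ham hbm
  have hk1 : 1 ≤ k := by
    by_contra hk0
    have hd1 : 1 ≤ d := le_trans ham.1 ham.2
    have h1' : d ≤ a := le_lane d x (t - 1) k d (Finset.mem_Icc.mpr ⟨hd1, le_rfl⟩) (by omega)
    have h2' : d ≤ b := le_lane d x t k d (Finset.mem_Icc.mpr ⟨hd1, le_rfl⟩) (by omega)
    exact hne (by omega)
  have ht2 : 1 ≤ t - 1 := by
    by_contra hc
    have h00 : t - 1 = 0 := by omega
    rw [h00] at has
    have hz : ∑ j' ∈ Finset.Icc a d, x 0 j' = 0 :=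
      Finset.sum_eq_zero fun j _ => hopt.1.1 j
    omega
  rcases lt_or_gt_of_ne hne with hab | hab
  · -- a < b : type j0 ≥ b powers up at t, some j1 ∈ [a,b) ran at t-1
    have hSb : ∑ j' ∈ Finset.Icc b d, x (t - 1) j' < k := by
      by_contra hc
      push_neg at hc
      have := le_lane d x (t - 1) k b (Finset.mem_Icc.mpr ⟨by omega, hbm.2⟩) hc
      omega
    have hlt : ∑ j' ∈ Finset.Icc b d, x (t - 1) j' < ∑ j' ∈ Finset.Icc b d, x t j' :=
      lt_of_lt_of_le hSb hbs
    obtain ⟨j0, hj0m, hj0⟩ := Finset.exists_lt_of_sum_lt hlt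
    rw [Finset.mem_Icc] at hj0m
    have hsplit : ∑ j' ∈ Finset.Icc a d, x (t - 1) j'
        = ∑ j' ∈ Finset.Ico a b, x (t - 1) j' + ∑ j' ∈ Finset.Icc b d, x (t - 1) j' := by
      rw [← Finset.sum_union (by
        rw [Finset.disjoint_left]
        intro z hz hz'
        rw [Finset.mem_Ico] at hz
        rw [Finset.mem_Icc] at hz'
        omega)]
      refine Finset.sum_congr ?_ (fun _ _ => rfl)
      ext z
      rw [Finset.mem_Icc, Finset.mem_union, Finset.mem_Ico, Finset.mem_Icc]
      omega
    have hpos : 0 < ∑ j' ∈ Finset.Ico a b, x (t - 1) j' := by omega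
    obtain ⟨j1, hj1m, hj1⟩ := Finset.exists_lt_of_sum_lt
      (show ∑ j' ∈ Finset.Ico a b, 0 < ∑ j' ∈ Finset.Ico a b, x (t - 1) j' by
        simpa using hpos)
    rw [Finset.mem_Ico] at hj1m
    exact exchangeB T d m lam β l x hopt j0 j1 t (by omega) (by omega) hj0m.2
      (hl j1 j0 (by omega) (by omega) hj0m.2)
      (le_of_lt (hβ j1 j0 (by omega) (by omega) hj0m.2))
      (le_of_lt (hβ0 j0 (by omega) hj0m.2))
      (le_of_lt (hβ0 j1 (by omega) (by omega)))
      ht1 htT hj0 hj1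
  · -- b < a : type j0 ≥ a powers down at t, some j1 ∈ [b,a) runs at t
    have hSa : ∑ j' ∈ Finset.Icc a d, x t j' < k := by
      by_contra hc
      push_neg at hc
      have := le_lane d x t k a (Finset.mem_Icc.mpr ⟨by omega, ham.2⟩) hc
      omega
    have hlt : ∑ j' ∈ Finset.Icc a d, x t j' < ∑ j' ∈ Finset.Icc a d, x (t - 1) j' :=
      lt_of_lt_of_le hSa has
    obtain ⟨j0, hj0m, hj0⟩ := Finset.exists_lt_of_sum_lt hlt
    rw [Finset.mem_Icc] at hj0m
    have hsplit : ∑ j' ∈ Finset.Icc b d, x t j'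
        = ∑ j' ∈ Finset.Ico b a, x t j' + ∑ j' ∈ Finset.Icc a d, x t j' := by
      rw [← Finset.sum_union (by
        rw [Finset.disjoint_left]
        intro z hz hz'
        rw [Finset.mem_Ico] at hz
        rw [Finset.mem_Icc] at hz'
        omega)]
      refine Finset.sum_congr ?_ (fun _ _ => rfl)
      ext z
      rw [Finset.mem_Icc, Finset.mem_union, Finset.mem_Ico, Finset.mem_Icc]
      omega
    have hpos : 0 < ∑ j' ∈ Finset.Ico b a, x t j' := by omega
    obtain ⟨j1, hj1m, hj1⟩ := Finset.exists_lt_of_sum_lt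
      (show ∑ j' ∈ Finset.Ico b a, 0 < ∑ j' ∈ Finset.Ico b a, x t j' by
        simpa using hpos)
    rw [Finset.mem_Ico] at hj1m
    exact exchangeA T d m lam β l x hopt j0 j1 t (by omega) (by omega) hj0m.2
      (hl j1 j0 (by omega) (by omega) hj0m.2)
      (le_of_lt (hβ j1 j0 (by omega) (by omega) hj0m.2))
      (le_of_lt (hβ0 j0 (by omega) hj0m.2))
      (le_of_lt (hβ0 j1 (by omega) (by omega)))
      ht1 htT hj0 hj1
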